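/- Let B be a mixed Nash equilibrium of the single-item first-price auction in which two players i and j have strictly positive expected utilities, E[u_i] > 0 and E[u_j] > 0. Let G_k be the CDF of B_k and q_k = inf{x : G_k(x) > 0}. Then q_i = q_j =: q, and moreover G_i(q) = G_j(q) = 0, and consequently F_i(q) = F_j(q) = 0, where F_k(x) = P_{b_{−k}∼B_{−k}}[max_{l≠k} b_l ≤ x]. -/

import Mathlib

set_option linter.unusedSectionVars false
set_option linter.unusedVariables false
set_option linter.unnecessarySimpa false
open MeasureTheory


section Aux
variable {n : ℕ}

lemma meas_update_fun (k : Fin n) (a : ℝ) :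
    Measurable (fun b : Fin n → ℝ => Function.update b k a) := by
  apply measurable_pi_lambda
  intro m
  by_cases h : m = k
  · subst h; simpa using measurable_const
  · have : (fun b : Fin n → ℝ => Function.update b k a m) = fun b => b m := by
      funext b; rw [Function.update_of_ne h]
    rw [this]; exact measurable_pi_apply m

lemma meas_update_pair (k : Fin n) :
    Measurable (fun p : ℝ × (Fin n → ℝ) => Function.update p.2 k p.1) := by
  apply measurable_pi_lambda
  intro m
  by_cases h : m = k
  · subst h
    have : (fun p : ℝ × (Fin n → ℝ) => Function.update p.2 m p.1 m) = fun p => p.1 := by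
      funext p; rw [Function.update_self]
    rw [this]; exact measurable_fst
  · have : (fun p : ℝ × (Fin n → ℝ) => Function.update p.2 k p.1 m) = fun p => p.2 m := by
      funext p; rw [Function.update_of_ne h]
    rw [this]; exact (measurable_pi_apply m).comp measurable_snd

lemma cyl_eq (k : Fin n) (s : Fin n → Set ℝ) (S : Set ℝ) :
    {b : Fin n → ℝ | b k ∈ S ∧ ∀ m, m ≠ k → b m ∈ s m}
      = Set.univ.pi (Function.update s k S) := by
  ext b
  simp only [Set.mem_setOf_eq, Set.mem_univ_pi]
  constructor
  · rintro ⟨h1, h2⟩ m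
    by_cases h : m = k
    · subst h; rwa [Function.update_self]
    · rw [Function.update_of_ne h]; exact h2 m h
  · intro h
    refine ⟨by simpa using h k, fun m hm => ?_⟩
    have := h m; rwa [Function.update_of_ne hm] at this

lemma cyl_measurable (k : Fin n) (s : Fin n → Set ℝ) (S : Set ℝ)
    (hs : ∀ m, MeasurableSet (s m)) (hS : MeasurableSet S) :
    MeasurableSet {b : Fin n → ℝ | b k ∈ S ∧ ∀ m, m ≠ k → b m ∈ s m} := by
  rw [cyl_eq]
  apply MeasurableSet.univ_pi
  intro m
  by_cases h : m = k
  · subst h; rwa [Function.update_self]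
  · rw [Function.update_of_ne h]; exact hs m

variable (B : Fin n → Measure ℝ) [∀ i, IsProbabilityMeasure (B i)]

lemma pi_upd (k : Fin n) (s : Fin n → Set ℝ) (S : Set ℝ)
    (hs : ∀ m, MeasurableSet (s m)) (hS : MeasurableSet S) :
    Measure.pi B {b : Fin n → ℝ | b k ∈ S ∧ ∀ m, m ≠ k → b m ∈ s m}
      = B k S * ∏ m ∈ Finset.univ.erase k, B m (s m) := by
  rw [cyl_eq, Measure.pi_pi]
  rw [← Finset.mul_prod_erase Finset.univ _ (Finset.mem_univ k)]
  rw [Function.update_self]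
  congr 1
  apply Finset.prod_congr rfl
  intro m hm
  rw [Function.update_of_ne (Finset.ne_of_mem_erase hm)]

lemma pi_off (k : Fin n) (s : Fin n → Set ℝ) (hs : ∀ m, MeasurableSet (s m)) :
    Measure.pi B {b : Fin n → ℝ | ∀ m, m ≠ k → b m ∈ s m}
      = ∏ m ∈ Finset.univ.erase k, B m (s m) := by
  have : {b : Fin n → ℝ | ∀ m, m ≠ k → b m ∈ s m}
      = {b : Fin n → ℝ | b k ∈ (Set.univ : Set ℝ) ∧ ∀ m, m ≠ k → b m ∈ s m} := by
    ext b; simp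
  rw [this, pi_upd B k s Set.univ hs MeasurableSet.univ, measure_univ, one_mul]

lemma pi_eval (m : Fin n) (S : Set ℝ) (hS : MeasurableSet S) :
    Measure.pi B {b : Fin n → ℝ | b m ∈ S} = B m S := by
  have : {b : Fin n → ℝ | b m ∈ S}
      = {b : Fin n → ℝ | b m ∈ S ∧ ∀ l, l ≠ m → b l ∈ (Set.univ : Set ℝ)} := by
    ext b; simp
  rw [this, pi_upd B m (fun _ => Set.univ) S (fun _ => MeasurableSet.univ) hS]
  simp

lemma pi_map_update (k : Fin n) :
    Measure.map (fun p : ℝ × (Fin n → ℝ) => Function.update p.2 k p.1)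
      ((B k).prod (Measure.pi B)) = Measure.pi B := by
  refine (Measure.pi_eq ?_).symm
  intro s hs
  rw [Measure.map_apply (meas_update_pair k) (MeasurableSet.univ_pi hs)]
  have hpre : (fun p : ℝ × (Fin n → ℝ) => Function.update p.2 k p.1) ⁻¹' (Set.univ.pi s)
      = s k ×ˢ {b : Fin n → ℝ | ∀ m, m ≠ k → b m ∈ s m} := by
    ext p
    simp only [Set.mem_preimage, Set.mem_univ_pi, Set.mem_prod, Set.mem_setOf_eq]
    constructor
    · intro h
      refine ⟨by simpa using h k, fun m hm => ?_⟩
      have := h m; rwa [Function.update_of_ne hm] at this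
    · rintro ⟨h1, h2⟩ m
      by_cases h : m = k
      · subst h; rwa [Function.update_self]
      · rw [Function.update_of_ne h]; exact h2 m h
  rw [hpre, Measure.prod_prod, pi_off B k s hs,
    ← Finset.mul_prod_erase Finset.univ (fun m => B m (s m)) (Finset.mem_univ k)]

end Aux


section Aux2
variable {n : ℕ} (v : Fin n → ℝ) (τ : (Fin n → ℝ) → Fin n → ℝ)
  (hτ_meas : ∀ i, Measurable fun b => τ b i)
  (hτ_nonneg : ∀ b i, 0 ≤ τ b i)
  (hτ_sum : ∀ b, ∑ i, τ b i = 1)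
  (hτ_max : ∀ b i, (∃ k, b i < b k) → τ b i = 0)
  (u : Fin n → (Fin n → ℝ) → ℝ) (hu : ∀ i b, u i b = τ b i * (v i - b i))
  (B : Fin n → Measure ℝ) [∀ i, IsProbabilityMeasure (B i)]

include hu hτ_meas in
lemma u_meas (k : Fin n) : Measurable (u k) := by
  have : u k = fun b => τ b k * (v k - b k) := funext (hu k)
  rw [this]
  exact (hτ_meas k).mul (measurable_const.sub (measurable_pi_apply k))

include hτ_nonneg hτ_sum in
lemma tau_le_one (b : Fin n → ℝ) (k : Fin n) : τ b k ≤ 1 := by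
  have h := Finset.single_le_sum (f := fun m => τ b m)
    (fun m _ => hτ_nonneg b m) (Finset.mem_univ k)
  rw [hτ_sum b] at h
  exact h

include hτ_meas hτ_nonneg hτ_sum in
lemma tau_int (k : Fin n) (a : ℝ) :
    Integrable (fun b => τ (Function.update b k a) k) (Measure.pi B) := by
  have hm : Measurable (fun b : Fin n → ℝ => τ (Function.update b k a) k) :=
    (hτ_meas k).comp (meas_update_fun k a)
  refine (integrable_const (1 : ℝ)).mono' hm.aestronglyMeasurable ?_
  filter_upwards with b
  rw [Real.norm_eq_abs, abs_of_nonneg (hτ_nonneg _ _)]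
  exact tau_le_one τ hτ_nonneg hτ_sum _ _

include hu in
lemma g_eq (k : Fin n) (a : ℝ) :
    ∫ b, u k (Function.update b k a) ∂(Measure.pi B)
      = (v k - a) * ∫ b, τ (Function.update b k a) k ∂(Measure.pi B) := by
  have h : ∀ b : Fin n → ℝ, u k (Function.update b k a)
      = τ (Function.update b k a) k * (v k - a) := by
    intro b; rw [hu, Function.update_self]
  simp_rw [h]
  rw [integral_mul_const, mul_comm]

include hτ_meas hτ_nonneg hτ_sum hτ_max in
lemma W_le (k : Fin n) (a : ℝ)
    (hA : MeasurableSet {b : Fin n → ℝ | ∀ m, m ≠ k → b m ≤ a}) :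
    ∫ b, τ (Function.update b k a) k ∂(Measure.pi B)
      ≤ ((Measure.pi B) {b : Fin n → ℝ | ∀ m, m ≠ k → b m ≤ a}).toReal := by
  rw [← measureReal_def, ← integral_indicator_one hA]
  apply integral_mono (tau_int τ hτ_meas hτ_nonneg hτ_sum B k a)
    ((integrable_const (1:ℝ)).indicator hA)
  intro b
  by_cases hb : b ∈ {b : Fin n → ℝ | ∀ m, m ≠ k → b m ≤ a}
  · rw [Set.indicator_of_mem hb]
    exact tau_le_one τ hτ_nonneg hτ_sum _ _
  · rw [Set.indicator_of_notMem hb]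
    simp only [Set.mem_setOf_eq, not_forall] at hb
    obtain ⟨m, hm, hma⟩ := hb
    refine le_of_eq (hτ_max _ k ⟨m, ?_⟩)
    rw [Function.update_self, Function.update_of_ne hm]
    linarith

include hτ_meas hτ_nonneg hτ_sum hτ_max in
lemma W_ge (k : Fin n) (a : ℝ)
    (hA : MeasurableSet {b : Fin n → ℝ | ∀ m, m ≠ k → b m < a}) :
    ((Measure.pi B) {b : Fin n → ℝ | ∀ m, m ≠ k → b m < a}).toReal
      ≤ ∫ b, τ (Function.update b k a) k ∂(Measure.pi B) := by
  rw [← measureReal_def, ← integral_indicator_one hA]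
  apply integral_mono ((integrable_const (1:ℝ)).indicator hA)
    (tau_int τ hτ_meas hτ_nonneg hτ_sum B k a)
  intro b
  by_cases hb : b ∈ {b : Fin n → ℝ | ∀ m, m ≠ k → b m < a}
  · rw [Set.indicator_of_mem hb]
    have hz : ∀ m ∈ Finset.univ.erase k, τ (Function.update b k a) m = 0 := by
      intro m hm
      have hmk : m ≠ k := Finset.ne_of_mem_erase hm
      refine hτ_max _ m ⟨k, ?_⟩
      rw [Function.update_self, Function.update_of_ne hmk]
      exact hb m hmk
    have hsum := hτ_sum (Function.update b k a)
    rw [← Finset.add_sum_erase Finset.univ _ (Finset.mem_univ k),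
      Finset.sum_eq_zero hz, add_zero] at hsum
    simp [hsum]
  · rw [Set.indicator_of_notMem hb]
    exact hτ_nonneg _ _

include hu hτ_max hτ_meas hτ_nonneg hτ_sum in
lemma g_zero (k : Fin n) (a : ℝ) (m : Fin n) (hmk : m ≠ k)
    (h0 : B m (Set.Iic a) = 0) :
    ∫ b, u k (Function.update b k a) ∂(Measure.pi B) = 0 := by
  have hnull : (Measure.pi B) {b : Fin n → ℝ | b m ∈ Set.Iic a} = 0 := by
    rw [pi_eval B m _ measurableSet_Iic, h0]
  have hae : ∀ᵐ b ∂(Measure.pi B), a < b m := by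
    rw [ae_iff]
    simpa [not_lt] using hnull
  have : ∀ᵐ b ∂(Measure.pi B), u k (Function.update b k a) = 0 := by
    filter_upwards [hae] with b hb
    rw [hu]
    have : τ (Function.update b k a) k = 0 := by
      refine hτ_max _ k ⟨m, ?_⟩
      rw [Function.update_self, Function.update_of_ne hmk]
      exact hb
    rw [this, zero_mul]
  calc ∫ b, u k (Function.update b k a) ∂(Measure.pi B)
      = ∫ _b, (0:ℝ) ∂(Measure.pi B) := integral_congr_ae this
    _ = 0 := integral_zero _ _

include hu hτ_meas in
lemma ae_best
    (hB_supp : ∀ i, B i (Set.Iio 0) = 0)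
    (hInt : ∀ i, Integrable (u i) (Measure.pi B))
    (hIntDev : ∀ i (a : ℝ),
      Integrable (fun b => u i (Function.update b i a)) (Measure.pi B))
    (hNash : ∀ i (a : ℝ), 0 ≤ a →
      (∫ b, u i b ∂(Measure.pi B)) ≥ ∫ b, u i (Function.update b i a) ∂(Measure.pi B))
    (k : Fin n) :
    ∀ᵐ a ∂(B k), (∫ b, u k (Function.update b k a) ∂(Measure.pi B))
      = ∫ b, u k b ∂(Measure.pi B) := by
  set E : ℝ := ∫ b, u k b ∂(Measure.pi B) with hE
  set g : ℝ → ℝ := fun a => ∫ b, u k (Function.update b k a) ∂(Measure.pi B) with hg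
  have hmu : Measurable (u k) := u_meas v τ hτ_meas u hu k
  have hmap := pi_map_update B k
  have hint2 : Integrable (fun p : ℝ × (Fin n → ℝ) => u k (Function.update p.2 k p.1))
      ((B k).prod (Measure.pi B)) := by
    have h1 : Integrable (u k)
        (Measure.map (fun p : ℝ × (Fin n → ℝ) => Function.update p.2 k p.1)
          ((B k).prod (Measure.pi B))) := by rw [hmap]; exact hInt k
    exact (integrable_map_measure (by rw [hmap]; exact hmu.aestronglyMeasurable)
      (meas_update_pair k).aemeasurable).mp h1
  have hkey : E = ∫ a, g a ∂(B k) := by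
    calc E = ∫ b, u k b
        ∂(Measure.map (fun p : ℝ × (Fin n → ℝ) => Function.update p.2 k p.1)
          ((B k).prod (Measure.pi B))) := by rw [hmap]
      _ = ∫ p : ℝ × (Fin n → ℝ), u k (Function.update p.2 k p.1)
          ∂((B k).prod (Measure.pi B)) :=
        integral_map (meas_update_pair k).aemeasurable
          (by rw [hmap]; exact hmu.aestronglyMeasurable)
      _ = ∫ a, g a ∂(B k) := integral_prod _ hint2
  have hgint : Integrable g (B k) := hint2.integral_prod_left
  have hae0 : ∀ᵐ a ∂(B k), 0 ≤ a := by
    rw [ae_iff]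
    simp only [not_le]; exact hB_supp k
  have hle : ∀ᵐ a ∂(B k), g a ≤ E := by
    filter_upwards [hae0] with a ha
    exact hNash k a ha
  have hzero : ∫ a, (E - g a) ∂(B k) = 0 := by
    rw [integral_sub (integrable_const E) hgint, integral_const]
    simp [← hkey]
  have := (integral_eq_zero_iff_of_nonneg_ae
    (by filter_upwards [hle] with a ha; simpa using ha)
    ((integrable_const E).sub hgint)).mp hzero
  filter_upwards [this] with a ha
  have : E - g a = 0 := ha
  linarith

end Aux2

section Helpers
lemma exists_mem_of_ae {μ : Measure ℝ} {s : Set ℝ} {p : ℝ → Prop}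
    (hs : μ s ≠ 0) (h : ∀ᵐ a ∂μ, p a) : ∃ a ∈ s, p a := by
  by_contra hc
  push_neg at hc
  refine hs (measure_mono_null ?_ (ae_iff.mp h))
  intro a ha
  exact hc a ha

lemma point_of_ae {μ : Measure ℝ} {x : ℝ} {p : ℝ → Prop}
    (hx : μ {x} ≠ 0) (h : ∀ᵐ a ∂μ, p a) : p x := by
  by_contra hc
  refine hx (measure_mono_null ?_ (ae_iff.mp h))
  intro a ha
  rw [Set.mem_singleton_iff] at ha
  subst ha; exact hc
end Helpers

section Aux3
variable {n : ℕ} (B : Fin n → Measure ℝ) [∀ i, IsProbabilityMeasure (B i)]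
  (hB_supp : ∀ i, B i (Set.Iio 0) = 0)
  (G : Fin n → ℝ → ℝ) (hG : ∀ k x, G k x = (B k (Set.Iic x)).toReal)
  (q : Fin n → ℝ) (hq : ∀ k, q k = sInf {x : ℝ | 0 < G k x})

include hG in
lemma G_ne (k : Fin n) : {x : ℝ | 0 < G k x}.Nonempty := by
  by_contra h
  rw [Set.not_nonempty_iff_eq_empty] at h
  have hz : ∀ x : ℝ, B k (Set.Iic x) = 0 := by
    intro x
    have hx : ¬ (0 < G k x) := by
      intro hx; exact absurd (h ▸ hx : x ∈ (∅ : Set ℝ)) (Set.notMem_empty x)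
    rw [hG] at hx
    have h0 : (B k (Set.Iic x)).toReal = 0 := le_antisymm (not_lt.mp hx) ENNReal.toReal_nonneg
    exact (ENNReal.toReal_eq_zero_iff _).mp h0 |>.resolve_right (measure_ne_top _ _)
  have huniv : (Set.univ : Set ℝ) = ⋃ m : ℕ, Set.Iic (m : ℝ) := by
    ext x
    simp only [Set.mem_univ, Set.mem_iUnion, Set.mem_Iic, true_iff]
    exact ⟨⌈x⌉₊, Nat.le_ceil x⟩
  have : B k Set.univ = 0 := by
    rw [huniv]
    exact measure_iUnion_null fun m => hz _
  simp [measure_univ] at this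

include hB_supp hG in
lemma G_bdd (k : Fin n) : ∀ x ∈ {x : ℝ | 0 < G k x}, (0:ℝ) ≤ x := by
  intro x hx
  by_contra hc
  push_neg at hc
  have : B k (Set.Iic x) = 0 :=
    measure_mono_null (fun y hy => lt_of_le_of_lt hy hc) (hB_supp k)
  rw [Set.mem_setOf_eq, hG, this] at hx
  simp at hx

include hB_supp hG hq in
lemma q_nonneg (k : Fin n) : 0 ≤ q k := by
  rw [hq]
  exact le_csInf (G_ne B G hG k) (G_bdd B hB_supp G hG k)

include hB_supp hG hq in
lemma Iic_null (k : Fin n) (x : ℝ) (h : x < q k) : B k (Set.Iic x) = 0 := by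
  by_contra hne
  have hpos : 0 < G k x := by
    rw [hG]; exact ENNReal.toReal_pos hne (measure_ne_top _ _)
  have : q k ≤ x := by
    rw [hq]
    exact csInf_le ⟨0, G_bdd B hB_supp G hG k⟩ hpos
  linarith

include hB_supp hG hq in
lemma Iio_null (k : Fin n) : B k (Set.Iio (q k)) = 0 := by
  have hunion : Set.Iio (q k) = ⋃ m : ℕ, Set.Iic (q k - 1/((m:ℝ)+1)) := by
    ext y
    simp only [Set.mem_Iio, Set.mem_iUnion, Set.mem_Iic]
    constructor
    · intro hy
      obtain ⟨m, hm⟩ := exists_nat_one_div_lt (sub_pos.2 hy)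
      exact ⟨m, by linarith⟩
    · rintro ⟨m, hm⟩
      have : (0:ℝ) < 1/((m:ℝ)+1) := by positivity
      linarith
  rw [hunion]
  refine measure_iUnion_null fun m => ?_
  refine Iic_null B hB_supp G hG q hq k _ ?_
  have : (0:ℝ) < 1/((m:ℝ)+1) := by positivity
  linarith

include hB_supp hG hq in
lemma atom_ne (k : Fin n) (h : B k (Set.Iic (q k)) ≠ 0) : B k {q k} ≠ 0 := by
  intro h0
  apply h
  have hsub : Set.Iic (q k) ⊆ Set.Iio (q k) ∪ {q k} := by
    intro y hy
    rcases lt_or_eq_of_le (Set.mem_Iic.mp hy) with h1 | h1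
    · exact Or.inl h1
    · exact Or.inr (by simp [h1])
  exact measure_mono_null hsub
    (measure_union_null (Iio_null B hB_supp G hG q hq k) h0)

end Aux3


lemma off_measurable {n : ℕ} (k : Fin n) (s : Fin n → Set ℝ)
    (hs : ∀ m, MeasurableSet (s m)) :
    MeasurableSet {b : Fin n → ℝ | ∀ m, m ≠ k → b m ∈ s m} := by
  have h : {b : Fin n → ℝ | ∀ m, m ≠ k → b m ∈ s m}
      = {b : Fin n → ℝ | b k ∈ (Set.univ : Set ℝ) ∧ ∀ m, m ≠ k → b m ∈ s m} := by
    ext b; simp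
  rw [h]; exact cyl_measurable k s Set.univ hs MeasurableSet.univ

lemma q_le_aux
    {n : ℕ} (v : Fin n → ℝ) (τ : (Fin n → ℝ) → Fin n → ℝ)
    (hτ_meas : ∀ i, Measurable fun b => τ b i)
    (hτ_nonneg : ∀ b i, 0 ≤ τ b i)
    (hτ_sum : ∀ b, ∑ i, τ b i = 1)
    (hτ_max : ∀ b i, (∃ k, b i < b k) → τ b i = 0)
    (u : Fin n → (Fin n → ℝ) → ℝ) (hu : ∀ i b, u i b = τ b i * (v i - b i))
    (B : Fin n → Measure ℝ) [∀ i, IsProbabilityMeasure (B i)]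
    (hB_supp : ∀ i, B i (Set.Iio 0) = 0)
    (hInt : ∀ i, Integrable (u i) (Measure.pi B))
    (hIntDev : ∀ i (a : ℝ),
      Integrable (fun b => u i (Function.update b i a)) (Measure.pi B))
    (hNash : ∀ i (a : ℝ), 0 ≤ a →
      (∫ b, u i b ∂(Measure.pi B)) ≥ ∫ b, u i (Function.update b i a) ∂(Measure.pi B))
    (G : Fin n → ℝ → ℝ) (hG : ∀ k x, G k x = (B k (Set.Iic x)).toReal)
    (q : Fin n → ℝ) (hq : ∀ k, q k = sInf {x : ℝ | 0 < G k x})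
    (i j : Fin n) (hij : i ≠ j)
    (hui : 0 < ∫ b, u i b ∂(Measure.pi B)) :
    q j ≤ q i := by
  by_contra hc
  push_neg at hc
  obtain ⟨x, hx, hxlt⟩ := exists_lt_of_csInf_lt (G_ne B G hG i) (by rw [← hq i]; exact hc)
  have hBx : B i (Set.Iic x) ≠ 0 := by
    intro h0
    rw [Set.mem_setOf_eq, hG, h0] at hx
    simp at hx
  obtain ⟨a, ha_mem, ha⟩ := exists_mem_of_ae hBx
    (ae_best v τ hτ_meas u hu B hB_supp hInt hIntDev hNash i)
  have hBja : B j (Set.Iic a) = 0 :=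
    Iic_null B hB_supp G hG q hq j a (lt_of_le_of_lt ha_mem hxlt)
  have h0 : ∫ b, u i (Function.update b i a) ∂(Measure.pi B) = 0 :=
    g_zero v τ hτ_meas hτ_nonneg hτ_sum hτ_max u hu B i a j hij.symm hBja
  rw [ha] at h0
  linarith

set_option maxHeartbeats 2000000 in
lemma noatom_aux
    {n : ℕ} (v : Fin n → ℝ) (τ : (Fin n → ℝ) → Fin n → ℝ)
    (hτ_meas : ∀ i, Measurable fun b => τ b i)
    (hτ_nonneg : ∀ b i, 0 ≤ τ b i)
    (hτ_sum : ∀ b, ∑ i, τ b i = 1)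
    (hτ_max : ∀ b i, (∃ k, b i < b k) → τ b i = 0)
    (u : Fin n → (Fin n → ℝ) → ℝ) (hu : ∀ i b, u i b = τ b i * (v i - b i))
    (B : Fin n → Measure ℝ) [∀ i, IsProbabilityMeasure (B i)]
    (hB_supp : ∀ i, B i (Set.Iio 0) = 0)
    (hInt : ∀ i, Integrable (u i) (Measure.pi B))
    (hIntDev : ∀ i (a : ℝ),
      Integrable (fun b => u i (Function.update b i a)) (Measure.pi B))
    (hNash : ∀ i (a : ℝ), 0 ≤ a →
      (∫ b, u i b ∂(Measure.pi B)) ≥ ∫ b, u i (Function.update b i a) ∂(Measure.pi B))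
    (G : Fin n → ℝ → ℝ) (hG : ∀ k x, G k x = (B k (Set.Iic x)).toReal)
    (q : Fin n → ℝ) (hq : ∀ k, q k = sInf {x : ℝ | 0 < G k x})
    (i j : Fin n) (hij : i ≠ j)
    (hui : 0 < ∫ b, u i b ∂(Measure.pi B))
    (huj : 0 < ∫ b, u j b ∂(Measure.pi B))
    (hqq : q i = q j) :
    B i (Set.Iic (q i)) = 0 := by
  set Q : ℝ := q i with hQdef
  have hQj : q j = Q := hqq.symm
  have hQ0 : (0:ℝ) ≤ Q := q_nonneg B hB_supp G hG q hq i
  by_contra hci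
  set E1 : ℝ := ∫ b, u i b ∂(Measure.pi B) with hE1
  set E2 : ℝ := ∫ b, u j b ∂(Measure.pi B) with hE2
  set Wi : ℝ → ℝ := fun x => ∫ b, τ (Function.update b i x) i ∂(Measure.pi B) with hWidef
  set Wj : ℝ := ∫ b, τ (Function.update b j Q) j ∂(Measure.pi B) with hWjdef
  -- player i has an atom at Q, and Q is a best response for i
  have hati : B i {Q} ≠ 0 := atom_ne B hB_supp G hG q hq i hci
  have hgi : ∫ b, u i (Function.update b i Q) ∂(Measure.pi B) = E1 :=
    point_of_ae (p := fun a => ∫ b, u i (Function.update b i a) ∂(Measure.pi B) = E1)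
      hati (ae_best v τ hτ_meas u hu B hB_supp hInt hIntDev hNash i)
  have hgieq : E1 = (v i - Q) * Wi Q := by
    rw [← hgi]; exact g_eq v τ u hu B i Q
  have hWiQnn : (0:ℝ) ≤ Wi Q := integral_nonneg fun b => hτ_nonneg _ _
  have hpi : 0 < (v i - Q) * Wi Q := by rw [← hgieq]; exact hui
  have hviQ : 0 < v i - Q := by
    rcases mul_pos_iff.mp hpi with ⟨h1, _⟩ | ⟨_, h2⟩
    · exact h1
    · linarith
  have hWiQpos : 0 < Wi Q := by nlinarith
  -- the winning-probability upper bound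
  have hAmeas : MeasurableSet {b : Fin n → ℝ | ∀ m, m ≠ i → b m ≤ Q} :=
    off_measurable i (fun _ => Set.Iic Q) (fun _ => measurableSet_Iic)
  set P : ℝ := ((Measure.pi B) {b : Fin n → ℝ | ∀ m, m ≠ i → b m ≤ Q}).toReal with hPdef
  have hWile : Wi Q ≤ P := W_le τ hτ_meas hτ_nonneg hτ_sum hτ_max B i Q hAmeas
  have hset : {b : Fin n → ℝ | ∀ m, m ≠ i → b m ≤ Q}
      = {b : Fin n → ℝ | ∀ m, m ≠ i → b m ∈ Set.Iic Q} := rfl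
  have hPle : (Measure.pi B) {b : Fin n → ℝ | ∀ m, m ≠ i → b m ≤ Q} ≤ B j (Set.Iic Q) := by
    rw [hset, pi_off B i (fun _ => Set.Iic Q) (fun _ => measurableSet_Iic)]
    have hj' : j ∈ Finset.univ.erase i := Finset.mem_erase.mpr ⟨hij.symm, Finset.mem_univ j⟩
    rw [← Finset.mul_prod_erase _ _ hj']
    calc B j (Set.Iic Q) * ∏ m ∈ (Finset.univ.erase i).erase j, B m (Set.Iic Q)
        ≤ B j (Set.Iic Q) * 1 := by
          gcongr
          exact Finset.prod_le_one' (fun m _ => prob_le_one)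
      _ = B j (Set.Iic Q) := mul_one _
  have hPle' : P ≤ (B j (Set.Iic Q)).toReal :=
    ENNReal.toReal_mono (measure_ne_top _ _) hPle
  have hcj : B j (Set.Iic Q) ≠ 0 := by
    intro h0
    rw [h0] at hPle'
    simp at hPle'
    nlinarith
  -- player j also has an atom at Q, and Q is a best response for j
  have hcjq : B j (Set.Iic (q j)) ≠ 0 := by rwa [hQj]
  have hatj : B j {Q} ≠ 0 := by
    have := atom_ne B hB_supp G hG q hq j hcjq
    rwa [hQj] at this
  have hgj : ∫ b, u j (Function.update b j Q) ∂(Measure.pi B) = E2 :=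
    point_of_ae (p := fun a => ∫ b, u j (Function.update b j a) ∂(Measure.pi B) = E2)
      hatj (ae_best v τ hτ_meas u hu B hB_supp hInt hIntDev hNash j)
  have hgjeq : E2 = (v j - Q) * Wj := by
    rw [← hgj]; exact g_eq v τ u hu B j Q
  have hWjnn : (0:ℝ) ≤ Wj := integral_nonneg fun b => hτ_nonneg _ _
  have hpj : 0 < (v j - Q) * Wj := by rw [← hgjeq]; exact huj
  have hvjQ : 0 < v j - Q := by
    rcases mul_pos_iff.mp hpj with ⟨h1, _⟩ | ⟨_, h2⟩
    · exact h1
    · linarith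
  have hWjpos : 0 < Wj := by nlinarith
  -- the deviation bound : P ≤ Wi Q
  have hPWi : P ≤ Wi Q := by
    by_contra hcon
    push_neg at hcon
    have hPpos : 0 < P := lt_of_le_of_lt hWiQnn hcon
    set ε : ℝ := min ((v i - Q)/2) ((v i - Q)*(P - Wi Q)/(2*P)) with hεdef
    have hε1 : 0 < ε := by
      apply lt_min
      · linarith
      · apply div_pos (mul_pos hviQ (by linarith)) (by linarith)
    have hε2 : ε < v i - Q := lt_of_le_of_lt (min_le_left _ _) (by linarith)
    have hkey : E1 ≥ (v i - Q - ε) * P := by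
      have h1 : E1 ≥ ∫ b, u i (Function.update b i (Q+ε)) ∂(Measure.pi B) :=
        hNash i (Q+ε) (by linarith)
      rw [g_eq v τ u hu B i (Q+ε)] at h1
      have hsmeas : MeasurableSet {b : Fin n → ℝ | ∀ m, m ≠ i → b m < Q+ε} :=
        off_measurable i (fun _ => Set.Iio (Q+ε)) (fun _ => measurableSet_Iio)
      have h3 := W_ge τ hτ_meas hτ_nonneg hτ_sum hτ_max B i (Q+ε) hsmeas
      have h4 : (Measure.pi B) {b : Fin n → ℝ | ∀ m, m ≠ i → b m ≤ Q}
          ≤ (Measure.pi B) {b : Fin n → ℝ | ∀ m, m ≠ i → b m < Q+ε} := by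
        apply measure_mono
        intro b hb m hm
        exact lt_of_le_of_lt (hb m hm) (by linarith)
      have h5 : P ≤ Wi (Q+ε) :=
        le_trans (le_trans (ENNReal.toReal_mono (measure_ne_top _ _) h4) h3) (le_refl _)
      have h6 : (v i - Q - ε) * P ≤ (v i - (Q+ε)) * Wi (Q+ε) := by
        have he : v i - (Q+ε) = v i - Q - ε := by ring
        rw [he]
        exact mul_le_mul_of_nonneg_left h5 (by linarith)
      linarith
    have hεP : ε * P ≤ (v i - Q)*(P - Wi Q)/2 := by
      have hm := min_le_right ((v i - Q)/2) ((v i - Q)*(P - Wi Q)/(2*P))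
      calc ε * P ≤ ((v i - Q)*(P - Wi Q)/(2*P)) * P :=
            mul_le_mul_of_nonneg_right hm hPpos.le
        _ = (v i - Q)*(P - Wi Q)/2 := by field_simp
    nlinarith
  -- the tie: both atoms bid Q, so the two (scaled) winning probabilities fit below P
  set hi : (Fin n → ℝ) → ℝ :=
    fun b => Set.indicator ({Q} : Set ℝ) (fun _ => (1:ℝ)) (b i)
      * τ (Function.update b i Q) i with hhidef
  set hj : (Fin n → ℝ) → ℝ :=
    fun b => Set.indicator ({Q} : Set ℝ) (fun _ => (1:ℝ)) (b j)
      * τ (Function.update b j Q) j with hhjdef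
  have hmes_ind : Measurable (Set.indicator ({Q} : Set ℝ) (fun _ => (1:ℝ))) :=
    measurable_const.indicator (measurableSet_singleton Q)
  have hmi : Measurable hi :=
    (hmes_ind.comp (measurable_pi_apply i)).mul ((hτ_meas i).comp (meas_update_fun i Q))
  have hmj : Measurable hj :=
    (hmes_ind.comp (measurable_pi_apply j)).mul ((hτ_meas j).comp (meas_update_fun j Q))
  have hind_int : ∀ a : ℝ, Set.indicator ({Q} : Set ℝ) (fun _ => (1:ℝ)) a = (({Q} : Set ℝ).indicator (1 : ℝ → ℝ)) a := by
    intro a; rfl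
  have hTint : ∀ (k : Fin n) (hk : Measurable
      (fun b : Fin n → ℝ => Set.indicator ({Q} : Set ℝ) (fun _ => (1:ℝ)) (b k)
        * τ (Function.update b k Q) k)),
      ∫ b, Set.indicator ({Q} : Set ℝ) (fun _ => (1:ℝ)) (b k)
          * τ (Function.update b k Q) k ∂(Measure.pi B)
        = (B k {Q}).toReal * ∫ b, τ (Function.update b k Q) k ∂(Measure.pi B) := by
    intro k hk
    have h1 : ∫ b, Set.indicator ({Q} : Set ℝ) (fun _ => (1:ℝ)) (b k)
          * τ (Function.update b k Q) k ∂(Measure.pi B)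
        = ∫ p : ℝ × (Fin n → ℝ), Set.indicator ({Q} : Set ℝ) (fun _ => (1:ℝ)) p.1
          * τ (Function.update p.2 k Q) k ∂((B k).prod (Measure.pi B)) := by
      conv_lhs => rw [← pi_map_update B k]
      rw [integral_map (meas_update_pair k).aemeasurable
        (by rw [pi_map_update B k]; exact hk.aestronglyMeasurable)]
      refine integral_congr_ae (Filter.Eventually.of_forall fun p => ?_)
      simp only []
      rw [Function.update_self, Function.update_idem]
    have h2 := integral_prod_mul (μ := B k) (ν := Measure.pi B)
      (f := fun a : ℝ => Set.indicator ({Q} : Set ℝ) (fun _ => (1:ℝ)) a)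
      (g := fun b : Fin n → ℝ => τ (Function.update b k Q) k)
    have h3 : (∫ a, Set.indicator ({Q} : Set ℝ) (fun _ => (1:ℝ)) a ∂(B k))
        = (B k {Q}).toReal := integral_indicator_one (measurableSet_singleton Q)
    refine h1.trans (h2.trans ?_)
    beta_reduce
    rw [h3]
  have hTi : ∫ b, hi b ∂(Measure.pi B) = (B i {Q}).toReal * Wi Q := hTint i hmi
  have hTj : ∫ b, hj b ∂(Measure.pi B) = (B j {Q}).toReal * Wj := hTint j hmj
  -- the common-tie event
  set D : Set (Fin n → ℝ) :=
    {b : Fin n → ℝ | b i ∈ ({Q} : Set ℝ) ∧ ∀ m, m ≠ i → b m ∈ Set.Iic Q} with hDdef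
  have hDmeas : MeasurableSet D :=
    cyl_measurable i (fun _ => Set.Iic Q) {Q} (fun _ => measurableSet_Iic)
      (measurableSet_singleton Q)
  have haeI : ∀ᵐ b ∂(Measure.pi B), Q ≤ b i := by
    rw [ae_iff]
    have hs : {b : Fin n → ℝ | ¬ Q ≤ b i} = {b : Fin n → ℝ | b i ∈ Set.Iio Q} := by
      ext b; simp [not_le]
    rw [hs, pi_eval B i _ measurableSet_Iio]
    exact Iio_null B hB_supp G hG q hq i
  have haeJ : ∀ᵐ b ∂(Measure.pi B), Q ≤ b j := by
    rw [ae_iff]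
    have hs : {b : Fin n → ℝ | ¬ Q ≤ b j} = {b : Fin n → ℝ | b j ∈ Set.Iio Q} := by
      ext b; simp [not_le]
    rw [hs, pi_eval B j _ measurableSet_Iio]
    have := Iio_null B hB_supp G hG q hq j
    rwa [hQj] at this
  have hbound : ∀ᵐ b ∂(Measure.pi B),
      hi b + hj b ≤ Set.indicator D (fun _ => (1:ℝ)) b := by
    filter_upwards [haeI, haeJ] with b hbi hbj
    by_cases hD : b ∈ D
    · rw [Set.indicator_of_mem hD]
      rw [hDdef] at hD
      obtain ⟨hbiQ, hble⟩ := hD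
      rw [Set.mem_singleton_iff] at hbiQ
      have hbjQ : b j = Q := le_antisymm (hble j hij.symm) hbj
      have hupd_i : Function.update b i Q = b := by
        rw [← hbiQ]; exact Function.update_eq_self i b
      have hupd_j : Function.update b j Q = b := by
        rw [← hbjQ]; exact Function.update_eq_self j b
      have h_hi : hi b = τ b i := by
        rw [hhidef]
        simp only []
        rw [hupd_i, hbiQ, Set.indicator_of_mem (Set.mem_singleton Q), one_mul]
      have h_hj : hj b = τ b j := by
        rw [hhjdef]
        simp only []
        rw [hupd_j, hbjQ, Set.indicator_of_mem (Set.mem_singleton Q), one_mul]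
      rw [h_hi, h_hj]
      have hsum := hτ_sum b
      have hj' : j ∈ Finset.univ.erase i := Finset.mem_erase.mpr ⟨hij.symm, Finset.mem_univ j⟩
      have hperm : τ b i + τ b j ≤ ∑ m, τ b m := by
        rw [← Finset.add_sum_erase Finset.univ _ (Finset.mem_univ i)]
        have hs := Finset.single_le_sum (f := fun m => τ b m)
          (fun m _ => hτ_nonneg b m) hj'
        linarith
      rw [hsum] at hperm
      exact hperm
    · rw [Set.indicator_of_notMem hD]
      rw [hDdef] at hD
      by_cases hbiQ : b i = Q
      · have hnall : ¬ ∀ m, m ≠ i → b m ∈ Set.Iic Q := by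
          intro hall
          exact hD ⟨Set.mem_singleton_iff.mpr hbiQ, hall⟩
        push_neg at hnall
        obtain ⟨m, hmi', hm⟩ := hnall
        have hmQ : Q < b m := not_le.mp (fun hc => hm hc)
        have hupd_i : Function.update b i Q = b := by
          rw [← hbiQ]; exact Function.update_eq_self i b
        have hi0 : hi b = 0 := by
          rw [hhidef]
          simp only []
          rw [hupd_i]
          have hz : τ b i = 0 := hτ_max b i ⟨m, by rw [hbiQ]; exact hmQ⟩
          rw [hz, mul_zero]
        have hj0 : hj b = 0 := by
          by_cases hbjQ : b j = Q
          · have hupd_j : Function.update b j Q = b := by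
              rw [← hbjQ]; exact Function.update_eq_self j b
            rw [hhjdef]
            simp only []
            rw [hupd_j]
            have hz : τ b j = 0 := hτ_max b j ⟨m, by rw [hbjQ]; exact hmQ⟩
            rw [hz, mul_zero]
          · rw [hhjdef]
            simp only []
            rw [Set.indicator_of_notMem (by simpa using hbjQ), zero_mul]
        rw [hi0, hj0]; norm_num
      · have hQbi : Q < b i := lt_of_le_of_ne hbi (Ne.symm hbiQ)
        have hi0 : hi b = 0 := by
          rw [hhidef]
          simp only []
          rw [Set.indicator_of_notMem (by simpa using hbiQ), zero_mul]
        have hj0 : hj b = 0 := by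
          by_cases hbjQ : b j = Q
          · have hupd_j : Function.update b j Q = b := by
              rw [← hbjQ]; exact Function.update_eq_self j b
            rw [hhjdef]
            simp only []
            rw [hupd_j]
            have hz : τ b j = 0 := hτ_max b j ⟨i, by rw [hbjQ]; exact hQbi⟩
            rw [hz, mul_zero]
          · rw [hhjdef]
            simp only []
            rw [Set.indicator_of_notMem (by simpa using hbjQ), zero_mul]
        rw [hi0, hj0]; norm_num
  -- integrability of the pieces
  have hbd1 : ∀ (k : Fin n) (b : Fin n → ℝ),
      Set.indicator ({Q} : Set ℝ) (fun _ => (1:ℝ)) (b k) ≤ 1 := by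
    intro k b
    by_cases hm : b k ∈ ({Q} : Set ℝ)
    · rw [Set.indicator_of_mem hm]
    · rw [Set.indicator_of_notMem hm]; norm_num
  have hint_of : ∀ (k : Fin n)
      (hk : Measurable (fun b : Fin n → ℝ =>
        Set.indicator ({Q} : Set ℝ) (fun _ => (1:ℝ)) (b k) * τ (Function.update b k Q) k)),
      Integrable (fun b : Fin n → ℝ =>
        Set.indicator ({Q} : Set ℝ) (fun _ => (1:ℝ)) (b k) * τ (Function.update b k Q) k)
        (Measure.pi B) := by
    intro k hk
    refine (integrable_const (1 : ℝ)).mono' hk.aestronglyMeasurable ?_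
    filter_upwards with b
    rw [Real.norm_eq_abs]
    have h1 : 0 ≤ Set.indicator ({Q} : Set ℝ) (fun _ => (1:ℝ)) (b k)
        * τ (Function.update b k Q) k :=
      mul_nonneg (Set.indicator_nonneg (fun _ _ => zero_le_one) _) (hτ_nonneg _ _)
    rw [abs_of_nonneg h1]
    calc Set.indicator ({Q} : Set ℝ) (fun _ => (1:ℝ)) (b k) * τ (Function.update b k Q) k
        ≤ 1 * 1 := mul_le_mul (hbd1 k b)
          (tau_le_one τ hτ_nonneg hτ_sum _ _) (hτ_nonneg _ _) zero_le_one
      _ = 1 := one_mul 1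
  have hint_i : Integrable hi (Measure.pi B) := hint_of i hmi
  have hint_j : Integrable hj (Measure.pi B) := hint_of j hmj
  have hint_D : Integrable (Set.indicator D (fun _ => (1:ℝ))) (Measure.pi B) :=
    (integrable_const (1:ℝ)).indicator hDmeas
  have hmono : ∫ b, (hi b + hj b) ∂(Measure.pi B)
      ≤ ∫ b, Set.indicator D (fun _ => (1:ℝ)) b ∂(Measure.pi B) :=
    integral_mono_ae (hint_i.add hint_j) hint_D hbound
  have hLHS : ∫ b, (hi b + hj b) ∂(Measure.pi B)
      = (B i {Q}).toReal * Wi Q + (B j {Q}).toReal * Wj := by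
    rw [integral_add hint_i hint_j, hTi, hTj]
  have hRHS : ∫ b, Set.indicator D (fun _ => (1:ℝ)) b ∂(Measure.pi B)
      = (B i {Q}).toReal * P := by
    have h1 : ∫ b, Set.indicator D (fun _ => (1:ℝ)) b ∂(Measure.pi B)
        = ((Measure.pi B) D).toReal := by
      rw [show (fun b : Fin n → ℝ => Set.indicator D (fun _ => (1:ℝ)) b)
          = D.indicator (1 : (Fin n → ℝ) → ℝ) from rfl]
      exact integral_indicator_one hDmeas
    rw [h1, hDdef,
      pi_upd B i (fun _ => Set.Iic Q) {Q} (fun _ => measurableSet_Iic)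
        (measurableSet_singleton Q),
      ENNReal.toReal_mul]
    congr 1
    rw [hPdef, hset, pi_off B i (fun _ => Set.Iic Q) (fun _ => measurableSet_Iic)]
  have hfinal : (B i {Q}).toReal * Wi Q + (B j {Q}).toReal * Wj
      ≤ (B i {Q}).toReal * P := by rw [← hLHS, ← hRHS]; exact hmono
  have hcipos : 0 < (B i {Q}).toReal := ENNReal.toReal_pos hati (measure_ne_top _ _)
  have hcjpos : 0 < (B j {Q}).toReal := ENNReal.toReal_pos hatj (measure_ne_top _ _)
  nlinarith

theorem stmt_5
    (n : ℕ)
    (v : Fin n → ℝ) (hv : ∀ i, 0 ≤ v i)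
    -- the tie-breaking rule: a measurable probability vector supported on the highest bidders
    (τ : (Fin n → ℝ) → Fin n → ℝ)
    (hτ_meas : ∀ i, Measurable fun b => τ b i)
    (hτ_nonneg : ∀ b i, 0 ≤ τ b i)
    (hτ_sum : ∀ b, ∑ i, τ b i = 1)
    (hτ_max : ∀ b i, (∃ k, b i < b k) → τ b i = 0)
    -- utilities
    (u : Fin n → (Fin n → ℝ) → ℝ)
    (hu : ∀ i b, u i b = τ b i * (v i - b i))
    -- the mixed strategy profile: independent bids, supported on `[0, ∞)`
    (B : Fin n → Measure ℝ)
    [∀ i, IsProbabilityMeasure (B i)]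
    (hB_supp : ∀ i, B i (Set.Iio 0) = 0)
    -- all relevant expectations exist
    (hInt : ∀ i, Integrable (u i) (Measure.pi B))
    (hIntDev : ∀ i (a : ℝ),
      Integrable (fun b => u i (Function.update b i a)) (Measure.pi B))
    -- the Nash equilibrium condition
    (hNash : ∀ i (a : ℝ), 0 ≤ a →
      (∫ b, u i b ∂(Measure.pi B)) ≥ ∫ b, u i (Function.update b i a) ∂(Measure.pi B))
    -- CDF of each player's bid, infimum of its support, CDF of the highest competing bid
    (G : Fin n → ℝ → ℝ) (hG : ∀ k x, G k x = (B k (Set.Iic x)).toReal)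
    (q : Fin n → ℝ) (hq : ∀ k, q k = sInf {x : ℝ | 0 < G k x})
    (F : Fin n → ℝ → ℝ)
    (hF : ∀ i x, F i x = ((Measure.pi B) {b | ∀ k, k ≠ i → b k ≤ x}).toReal)
    -- two distinct players with strictly positive expected utility
    (i j : Fin n) (hij : i ≠ j)
    (hui : 0 < ∫ b, u i b ∂(Measure.pi B))
    (huj : 0 < ∫ b, u j b ∂(Measure.pi B)) :
    q i = q j ∧ G i (q i) = 0 ∧ G j (q i) = 0 ∧ F i (q i) = 0 ∧ F j (q i) = 0 := by
  have hqij : q i = q j :=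
    le_antisymm
      (q_le_aux v τ hτ_meas hτ_nonneg hτ_sum hτ_max u hu B hB_supp hInt hIntDev hNash
        G hG q hq j i hij.symm huj)
      (q_le_aux v τ hτ_meas hτ_nonneg hτ_sum hτ_max u hu B hB_supp hInt hIntDev hNash
        G hG q hq i j hij hui)
  have hBi0 : B i (Set.Iic (q i)) = 0 :=
    noatom_aux v τ hτ_meas hτ_nonneg hτ_sum hτ_max u hu B hB_supp hInt hIntDev hNash
      G hG q hq i j hij hui huj hqij
  have hBj0 : B j (Set.Iic (q j)) = 0 :=
    noatom_aux v τ hτ_meas hτ_nonneg hτ_sum hτ_max u hu B hB_supp hInt hIntDev hNash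
      G hG q hq j i hij.symm huj hui hqij.symm
  have hBj0' : B j (Set.Iic (q i)) = 0 := by rw [hqij]; exact hBj0
  have hcross : ∀ (k l : Fin n), l ≠ k →
      (Measure.pi B) {b : Fin n → ℝ | ∀ m, m ≠ k → b m ≤ q i} ≤ B l (Set.Iic (q i)) := by
    intro k l hlk
    have hset : {b : Fin n → ℝ | ∀ m, m ≠ k → b m ≤ q i}
        = {b : Fin n → ℝ | ∀ m, m ≠ k → b m ∈ Set.Iic (q i)} := rfl
    rw [hset, pi_off B k (fun _ => Set.Iic (q i)) (fun _ => measurableSet_Iic)]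
    have hl' : l ∈ Finset.univ.erase k := Finset.mem_erase.mpr ⟨hlk, Finset.mem_univ l⟩
    rw [← Finset.mul_prod_erase _ _ hl']
    calc B l (Set.Iic (q i)) * ∏ m ∈ (Finset.univ.erase k).erase l, B m (Set.Iic (q i))
        ≤ B l (Set.Iic (q i)) * 1 := by
          gcongr
          exact Finset.prod_le_one' (fun m _ => prob_le_one)
      _ = B l (Set.Iic (q i)) := mul_one _
  refine ⟨hqij, ?_, ?_, ?_, ?_⟩
  · rw [hG, hBi0]; simp
  · rw [hG, hBj0']; simp
  · rw [hF]
    have h1 : (Measure.pi B) {b : Fin n → ℝ | ∀ k, k ≠ i → b k ≤ q i} = 0 :=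
      le_antisymm (le_trans (hcross i j hij.symm) (le_of_eq hBj0')) zero_le
    rw [h1]; simp
  · rw [hF]
    have h1 : (Measure.pi B) {b : Fin n → ℝ | ∀ k, k ≠ j → b k ≤ q i} = 0 :=
      le_antisymm (le_trans (hcross j i hij) (le_of_eq hBi0)) zero_le
    rw [h1]; simp
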